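/- Let a > 0, σ > 1, s ∈ [−1, 3/2), α ≥ 1 and β ≥ 1. There exists a constant C = C(s) > 0 such that for every f ∈ Ḣ^s_{a,σ}(ℝ³) ∩ Ḣ^{s+α}_{a,σ}(ℝ³) and g ∈ Ḣ^s_{a,σ}(ℝ³) ∩ Ḣ^{s+β}_{a,σ}(ℝ³) with ∫_{ℝ³} e^{(a/σ)|ξ|^{1/σ}} |f̂(ξ)| dξ < ∞ and ∫_{ℝ³} e^{(a/σ)|ξ|^{1/σ}} |ĝ(ξ)| dξ < ∞, the product fg belongs to Ḣ^{s+1}_{a,σ}(ℝ³) and ‖fg‖_{Ḣ^{s+1}_{a,σ}} ≤ C [ ‖e^{(a/σ)|·|^{1/σ}} f̂‖_{L¹} · ‖g‖_{Ḣ^s_{a,σ}}^{1−1/β} ‖g‖_{Ḣ^{s+β}_{a,σ}}^{1/β} + ‖e^{(a/σ)|·|^{1/σ}} ĝ‖_{L¹} · ‖f‖_{Ḣ^s_{a,σ}}^{1−1/α} ‖f‖_{Ḣ^{s+α}_{a,σ}}^{1/α} ]. -/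

import Mathlib

open MeasureTheory
open scoped ENNReal NNReal

noncomputable section

/-- Frequency space `ℝ³`. -/
abbrev R3 := EuclideanSpace ℝ (Fin 3)

/-- Squared Sobolev–Gevrey norm `‖f‖²_{Ḣ^s_{a,σ}} = ∫ |ξ|^{2s} e^{2a|ξ|^{1/σ}} |f̂(ξ)|² dξ`,
expressed on the Fourier side: `F` plays the role of the Fourier transform `f̂` of `f`. -/
def gevreySq (a σ s : ℝ) (F : R3 → ℂ) : ℝ≥0∞ :=
  ∫⁻ ξ : R3, ENNReal.ofReal (‖ξ‖ ^ (2 * s) * Real.exp (2 * a * ‖ξ‖ ^ (1 / σ))) *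
    (‖F ξ‖₊ : ℝ≥0∞) ^ 2

/-- The Sobolev–Gevrey norm `‖f‖_{Ḣ^s_{a,σ}}`, on the Fourier side. -/
def gevreyNorm (a σ s : ℝ) (F : R3 → ℂ) : ℝ≥0∞ := gevreySq a σ s F ^ (1 / 2 : ℝ)

/-- The exponentially weighted `L¹` norm `‖e^{c|·|^{1/σ}} f̂‖_{L¹}`. -/
def weightedL1 (c σ : ℝ) (F : R3 → ℂ) : ℝ≥0∞ :=
  ∫⁻ ξ : R3, ENNReal.ofReal (Real.exp (c * ‖ξ‖ ^ (1 / σ))) * (‖F ξ‖₊ : ℝ≥0∞)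

/-- Convolution on the Fourier side: up to a normalizing constant (absorbed in the
constant `C` below), `fconv f̂ ĝ` is the Fourier transform of the pointwise product `f·g`. -/
def fconv (F G : R3 → ℂ) (ξ : R3) : ℂ := ∫ η : R3, F (ξ - η) * G η

private lemma aux_rpow_subadd {x y θ : ℝ} (hx : 0 ≤ x) (hxy : x ≤ y) (hθ0 : 0 < θ)
    (hθ1 : θ ≤ 1) : (x + y) ^ θ ≤ θ * x ^ θ + y ^ θ := by
  have hy : 0 ≤ y := hx.trans hxy
  rcases eq_or_lt_of_le hx with hx0 | hx0
  · rw [← hx0, zero_add, Real.zero_rpow hθ0.ne']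
    simp
  · have hy0 : 0 < y := lt_of_lt_of_le hx0 hxy
    have ht0 : 0 < x / y := div_pos hx0 hy0
    have ht1 : x / y ≤ 1 := (div_le_one hy0).mpr hxy
    have hber : (1 + x / y) ^ θ ≤ 1 + θ * (x / y) ^ θ := by
      have h1 : (1 + x / y) ^ θ ≤ 1 + θ * (x / y) :=
        rpow_one_add_le_one_add_mul_self (by linarith) hθ0.le hθ1
      have h2 : x / y ≤ (x / y) ^ θ := by
        calc x / y = (x / y) ^ (1 : ℝ) := (Real.rpow_one _).symm
          _ ≤ (x / y) ^ θ := Real.rpow_le_rpow_of_exponent_ge ht0 ht1 hθ1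
      nlinarith
    have hxy' : x + y = y * (1 + x / y) := by field_simp; ring
    have hmul : y * (x / y) = x := by field_simp
    calc (x + y) ^ θ = (y * (1 + x / y)) ^ θ := by rw [← hxy']
      _ = y ^ θ * (1 + x / y) ^ θ := Real.mul_rpow hy (by positivity)
      _ ≤ y ^ θ * (1 + θ * (x / y) ^ θ) :=
          mul_le_mul_of_nonneg_left hber (Real.rpow_nonneg hy θ)
      _ = y ^ θ + θ * (y ^ θ * (x / y) ^ θ) := by ring
      _ = θ * x ^ θ + y ^ θ := by
          rw [← Real.mul_rpow hy ht0.le, hmul]; ring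
private lemma aux_weight_ordered {a σ p x y z : ℝ} (ha : 0 < a) (hσ : 1 < σ) (hp : 0 ≤ p)
    (hx : 0 ≤ x) (hz : 0 ≤ z) (hxy : x ≤ y) (hzxy : z ≤ x + y) :
    z ^ p * Real.exp (a * z ^ (1 / σ)) ≤
      2 ^ p * (Real.exp (a / σ * x ^ (1 / σ)) * (y ^ p * Real.exp (a * y ^ (1 / σ)))) := by
  have hy : 0 ≤ y := hx.trans hxy
  have hσ0 : 0 < σ := by linarith
  have hθ0 : 0 < 1 / σ := by positivity
  have hθ1 : 1 / σ ≤ 1 := by rw [div_le_one hσ0]; linarith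
  have h1 : z ^ p ≤ 2 ^ p * y ^ p := by
    calc z ^ p ≤ (2 * y) ^ p := Real.rpow_le_rpow hz (by linarith) hp
      _ = 2 ^ p * y ^ p := Real.mul_rpow (by norm_num) hy
  have h2 : a * z ^ (1 / σ) ≤ a / σ * x ^ (1 / σ) + a * y ^ (1 / σ) := by
    have hz' : z ^ (1 / σ) ≤ (x + y) ^ (1 / σ) := Real.rpow_le_rpow hz hzxy hθ0.le
    have hsub := aux_rpow_subadd hx hxy hθ0 hθ1
    have h := mul_le_mul_of_nonneg_left (hz'.trans hsub) ha.le
    calc a * z ^ (1 / σ) ≤ a * (1 / σ * x ^ (1 / σ) + y ^ (1 / σ)) := h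
      _ = a / σ * x ^ (1 / σ) + a * y ^ (1 / σ) := by ring
  calc z ^ p * Real.exp (a * z ^ (1 / σ))
      ≤ (2 ^ p * y ^ p) * Real.exp (a / σ * x ^ (1 / σ) + a * y ^ (1 / σ)) :=
        mul_le_mul h1 (Real.exp_le_exp.mpr h2) (Real.exp_pos _).le (by positivity)
    _ = 2 ^ p * (Real.exp (a / σ * x ^ (1 / σ)) * (y ^ p * Real.exp (a * y ^ (1 / σ)))) := by
        rw [Real.exp_add]; ring
private def kE (c σ : ℝ) (ξ : R3) : ℝ≥0∞ := ENNReal.ofReal (Real.exp (c * ‖ξ‖ ^ (1 / σ)))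
private def kW (a σ t : ℝ) (ξ : R3) : ℝ≥0∞ :=
  ENNReal.ofReal (‖ξ‖ ^ t * Real.exp (a * ‖ξ‖ ^ (1 / σ)))
private lemma kE_meas (c σ : ℝ) : Measurable (kE c σ) := by unfold kE; fun_prop
private lemma kW_meas (a σ t : ℝ) : Measurable (kW a σ t) := by unfold kW; fun_prop
private lemma esq (x : ℝ≥0∞) : x ^ (2 : ℝ) = x ^ 2 := by
  rw [show (2 : ℝ) = ((2 : ℕ) : ℝ) by norm_num, ENNReal.rpow_natCast]
private lemma kW_sq (a σ t : ℝ) (ξ : R3) :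
    kW a σ t ξ * kW a σ t ξ =
      ENNReal.ofReal (‖ξ‖ ^ (2 * t) * Real.exp (2 * a * ‖ξ‖ ^ (1 / σ))) := by
  unfold kW
  rw [← ENNReal.ofReal_mul (by positivity)]
  congr 1
  have e1 : ‖ξ‖ ^ (2 * t) = ‖ξ‖ ^ t * ‖ξ‖ ^ t := by
    rw [show (2 : ℝ) * t = t * 2 by ring, Real.rpow_mul (norm_nonneg ξ),
      show (2 : ℝ) = ((2 : ℕ) : ℝ) by norm_num, Real.rpow_natCast]
    ring
  have e2 : Real.exp (2 * a * ‖ξ‖ ^ (1 / σ)) =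
      Real.exp (a * ‖ξ‖ ^ (1 / σ)) * Real.exp (a * ‖ξ‖ ^ (1 / σ)) := by
    rw [← Real.exp_add]; ring_nf
  rw [e1, e2]; ring
private lemma gevreySq_eq (a σ t : ℝ) (H : R3 → ℂ) :
    gevreySq a σ t H = ∫⁻ ξ : R3, (kW a σ t ξ * (‖H ξ‖₊ : ℝ≥0∞)) ^ 2 := by
  unfold gevreySq
  congr 1; funext ξ
  conv_rhs => rw [mul_pow, pow_two, kW_sq]
private lemma kW_split {a σ s : ℝ} (ha : 0 < a) (hσ : 1 < σ) (hs1 : -1 ≤ s) (ξ η : R3) :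
    kW a σ (s + 1) ξ ≤ ENNReal.ofReal ((2 : ℝ) ^ (s + 1)) *
      (kE (a / σ) σ (ξ - η) * kW a σ (s + 1) η +
       kW a σ (s + 1) (ξ - η) * kE (a / σ) σ η) := by
  have hp : (0 : ℝ) ≤ s + 1 := by linarith
  have hz : ‖ξ‖ ≤ ‖ξ - η‖ + ‖η‖ := by
    calc ‖ξ‖ = ‖(ξ - η) + η‖ := by rw [sub_add_cancel]
      _ ≤ ‖ξ - η‖ + ‖η‖ := norm_add_le _ _
  unfold kE kW
  rcases le_total ‖ξ - η‖ ‖η‖ with hxy | hyx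
  · have h := aux_weight_ordered ha hσ hp (norm_nonneg (ξ - η)) (norm_nonneg ξ) hxy hz
    calc ENNReal.ofReal (‖ξ‖ ^ (s + 1) * Real.exp (a * ‖ξ‖ ^ (1 / σ)))
        ≤ ENNReal.ofReal ((2 : ℝ) ^ (s + 1) * (Real.exp (a / σ * ‖ξ - η‖ ^ (1 / σ)) *
            (‖η‖ ^ (s + 1) * Real.exp (a * ‖η‖ ^ (1 / σ))))) := ENNReal.ofReal_le_ofReal h
      _ = ENNReal.ofReal ((2 : ℝ) ^ (s + 1)) *
            (ENNReal.ofReal (Real.exp (a / σ * ‖ξ - η‖ ^ (1 / σ))) *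
             ENNReal.ofReal (‖η‖ ^ (s + 1) * Real.exp (a * ‖η‖ ^ (1 / σ)))) := by
          rw [ENNReal.ofReal_mul (by positivity), ENNReal.ofReal_mul (by positivity)]
      _ ≤ _ := by gcongr; exact le_self_add
  · have h := aux_weight_ordered ha hσ hp (norm_nonneg η) (norm_nonneg ξ) hyx
      (by rw [add_comm] at hz; exact hz)
    calc ENNReal.ofReal (‖ξ‖ ^ (s + 1) * Real.exp (a * ‖ξ‖ ^ (1 / σ)))
        ≤ ENNReal.ofReal ((2 : ℝ) ^ (s + 1) * (Real.exp (a / σ * ‖η‖ ^ (1 / σ)) *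
            (‖ξ - η‖ ^ (s + 1) * Real.exp (a * ‖ξ - η‖ ^ (1 / σ))))) := ENNReal.ofReal_le_ofReal h
      _ = ENNReal.ofReal ((2 : ℝ) ^ (s + 1)) *
            (ENNReal.ofReal (‖ξ - η‖ ^ (s + 1) * Real.exp (a * ‖ξ - η‖ ^ (1 / σ))) *
             ENNReal.ofReal (Real.exp (a / σ * ‖η‖ ^ (1 / σ)))) := by
          rw [ENNReal.ofReal_mul (by positivity), ENNReal.ofReal_mul (by positivity)]
          ring
      _ ≤ _ := by gcongr; exact le_add_self
private lemma conv_comm (X Y : R3 → ℝ≥0∞) (hX : Measurable X) (hY : Measurable Y) (ξ : R3) :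
    ∫⁻ η : R3, X (ξ - η) * Y η = ∫⁻ η : R3, Y (ξ - η) * X η := by
  have mp := Measure.measurePreserving_sub_left (volume : Measure R3) ξ
  have hm : Measurable fun η : R3 => X (ξ - η) * Y η :=
    (hX.comp (measurable_const.sub measurable_id)).mul hY
  have h := mp.lintegral_comp (f := fun η : R3 => X (ξ - η) * Y η) hm
  simp only [sub_sub_cancel] at h
  rw [← h]
  exact lintegral_congr fun η => mul_comm _ _
private lemma young_conv (A B : R3 → ℝ≥0∞) (hA : Measurable A) (hB : Measurable B) :
    ∫⁻ ξ : R3, (∫⁻ η : R3, A (ξ - η) * B η) ^ 2 ≤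
      (∫⁻ ζ : R3, A ζ) ^ 2 * ∫⁻ η : R3, (B η) ^ 2 := by
  have e2 : ∀ u : ℝ≥0∞, (u ^ (1 / 2 : ℝ)) ^ (2 : ℝ) = u := fun u => by
    rw [← ENNReal.rpow_mul]; norm_num
  have e2' : ∀ u : ℝ≥0∞, (u ^ (1 / 2 : ℝ)) ^ 2 = u := fun u => by
    rw [← esq]; exact e2 u
  have hsub : ∀ ξ : R3, Measurable fun η : R3 => A (ξ - η) :=
    fun ξ => hA.comp (measurable_const.sub measurable_id)
  have htrans : ∀ η : R3, ∫⁻ ξ : R3, A (ξ - η) = ∫⁻ ζ : R3, A ζ := fun η =>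
    (measurePreserving_sub_right (volume : Measure R3) η).lintegral_comp hA
  have htrans' : ∀ ξ : R3, ∫⁻ η : R3, A (ξ - η) = ∫⁻ ζ : R3, A ζ := fun ξ =>
    (Measure.measurePreserving_sub_left (volume : Measure R3) ξ).lintegral_comp hA
  have key : ∀ ξ : R3, (∫⁻ η : R3, A (ξ - η) * B η) ^ 2 ≤
      (∫⁻ ζ : R3, A ζ) * ∫⁻ η : R3, A (ξ - η) * (B η) ^ 2 := by
    intro ξ
    have hCS : (∫⁻ η : R3, A (ξ - η) * B η) ≤
        (∫⁻ η : R3, A (ξ - η)) ^ (1 / 2 : ℝ) *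
          (∫⁻ η : R3, A (ξ - η) * (B η) ^ 2) ^ (1 / 2 : ℝ) := by
      have h := ENNReal.lintegral_mul_le_Lp_mul_Lq (volume : Measure R3)
        (⟨by norm_num, by norm_num, by norm_num⟩ : Real.HolderConjugate 2 2)
        (f := fun η : R3 => (A (ξ - η)) ^ (1 / 2 : ℝ))
        (g := fun η : R3 => (A (ξ - η)) ^ (1 / 2 : ℝ) * B η)
        ((hsub ξ).pow_const _).aemeasurable
        (((hsub ξ).pow_const _).mul hB).aemeasurable
      have hfg : ∀ η : R3, (A (ξ - η)) ^ (1 / 2 : ℝ) *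
          ((A (ξ - η)) ^ (1 / 2 : ℝ) * B η) = A (ξ - η) * B η := fun η => by
        rw [← mul_assoc, ← ENNReal.rpow_add_of_nonneg _ _ (by norm_num) (by norm_num)]
        norm_num
      have hf2 : ∀ η : R3, ((A (ξ - η)) ^ (1 / 2 : ℝ)) ^ (2 : ℝ) = A (ξ - η) := fun η => e2 _
      have hg2 : ∀ η : R3, ((A (ξ - η)) ^ (1 / 2 : ℝ) * B η) ^ (2 : ℝ)
          = A (ξ - η) * (B η) ^ 2 := fun η => by
        rw [ENNReal.mul_rpow_of_nonneg _ _ (by norm_num : (0:ℝ) ≤ 2), e2, esq]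
      simp only [Pi.mul_apply, hfg, hf2, hg2] at h
      exact h
    calc (∫⁻ η : R3, A (ξ - η) * B η) ^ 2
        ≤ ((∫⁻ η : R3, A (ξ - η)) ^ (1 / 2 : ℝ) *
            (∫⁻ η : R3, A (ξ - η) * (B η) ^ 2) ^ (1 / 2 : ℝ)) ^ 2 := by
          exact pow_le_pow_left' hCS 2
      _ = (∫⁻ ζ : R3, A ζ) * ∫⁻ η : R3, A (ξ - η) * (B η) ^ 2 := by
          rw [mul_pow, e2', e2', htrans' ξ]
  have hm2 : Measurable (Function.uncurry fun ξ η : R3 => A (ξ - η) * (B η) ^ 2) :=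
    (hA.comp (measurable_fst.sub measurable_snd)).mul ((hB.comp measurable_snd).pow_const 2)
  calc ∫⁻ ξ : R3, (∫⁻ η : R3, A (ξ - η) * B η) ^ 2
      ≤ ∫⁻ ξ : R3, (∫⁻ ζ : R3, A ζ) * ∫⁻ η : R3, A (ξ - η) * (B η) ^ 2 :=
        lintegral_mono key
    _ = (∫⁻ ζ : R3, A ζ) * ∫⁻ ξ : R3, ∫⁻ η : R3, A (ξ - η) * (B η) ^ 2 :=
        lintegral_const_mul _ hm2.lintegral_prod_right
    _ = (∫⁻ ζ : R3, A ζ) * ∫⁻ η : R3, ∫⁻ ξ : R3, A (ξ - η) * (B η) ^ 2 := by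
        rw [lintegral_lintegral_swap hm2.aemeasurable]
    _ = (∫⁻ ζ : R3, A ζ) * ∫⁻ η : R3, (∫⁻ ξ : R3, A (ξ - η)) * (B η) ^ 2 := by
        congr 1
        exact lintegral_congr fun η => lintegral_mul_const _ (hA.comp (measurable_id.sub measurable_const))
    _ = (∫⁻ ζ : R3, A ζ) ^ 2 * ∫⁻ η : R3, (B η) ^ 2 := by
        have : ∀ η : R3, (∫⁻ ξ : R3, A (ξ - η)) * (B η) ^ 2
            = (∫⁻ ζ : R3, A ζ) * (B η) ^ 2 := fun η => by rw [htrans η]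
        simp only [this]
        rw [lintegral_const_mul _ (hB.pow_const 2)]
        ring
private lemma gevrey_interp {a σ s β : ℝ} (hβ : 1 < β)
    (G : R3 → ℂ) (hG : Measurable G) :
    gevreySq a σ (s + 1) G ≤
      gevreySq a σ s G ^ (1 - 1 / β) * gevreySq a σ (s + β) G ^ (1 / β) := by
  have hβ0 : (0 : ℝ) < β := by linarith
  have hl0 : (0 : ℝ) < 1 / β := by positivity
  have hl1 : 1 / β < 1 := by rw [div_lt_one hβ0]; linarith
  set u : R3 → ℝ≥0∞ := fun ξ =>
    ENNReal.ofReal (‖ξ‖ ^ (2 * s) * Real.exp (2 * a * ‖ξ‖ ^ (1 / σ))) * (‖G ξ‖₊ : ℝ≥0∞) ^ 2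
    with hu
  set v : R3 → ℝ≥0∞ := fun ξ =>
    ENNReal.ofReal (‖ξ‖ ^ (2 * (s + β)) * Real.exp (2 * a * ‖ξ‖ ^ (1 / σ))) *
      (‖G ξ‖₊ : ℝ≥0∞) ^ 2 with hv
  have hae : ∀ᵐ ξ : R3,
      (ENNReal.ofReal (‖ξ‖ ^ (2 * (s + 1)) * Real.exp (2 * a * ‖ξ‖ ^ (1 / σ))) *
        (‖G ξ‖₊ : ℝ≥0∞) ^ 2) = u ξ ^ (1 - 1 / β) * v ξ ^ (1 / β) := by
    have h0 : (volume : Measure R3) {0} = 0 := measure_singleton 0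
    rw [ae_iff]
    refine measure_mono_null (fun ξ hξ => ?_) h0
    simp only [Set.mem_setOf_eq] at hξ
    simp only [Set.mem_singleton_iff]
    by_contra hne
    apply hξ
    have hr : (0 : ℝ) < ‖ξ‖ := norm_pos_iff.mpr hne
    have hE : (0 : ℝ) < Real.exp (2 * a * ‖ξ‖ ^ (1 / σ)) := Real.exp_pos _
    have hmsplit : ((‖G ξ‖₊ : ℝ≥0∞) ^ 2) ^ (1 - 1 / β) * ((‖G ξ‖₊ : ℝ≥0∞) ^ 2) ^ (1 / β)
        = (‖G ξ‖₊ : ℝ≥0∞) ^ 2 := by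
      rw [← ENNReal.rpow_add_of_nonneg _ _ (by linarith) hl0.le, sub_add_cancel,
        ENNReal.rpow_one]
    have hreal : (‖ξ‖ ^ (2 * s) * Real.exp (2 * a * ‖ξ‖ ^ (1 / σ))) ^ (1 - 1 / β) *
        (‖ξ‖ ^ (2 * (s + β)) * Real.exp (2 * a * ‖ξ‖ ^ (1 / σ))) ^ (1 / β)
        = ‖ξ‖ ^ (2 * (s + 1)) * Real.exp (2 * a * ‖ξ‖ ^ (1 / σ)) := by
      rw [Real.mul_rpow (by positivity) hE.le, Real.mul_rpow (by positivity) hE.le,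
        ← Real.rpow_mul hr.le, ← Real.rpow_mul hr.le]
      calc ‖ξ‖ ^ (2 * s * (1 - 1 / β)) * Real.exp (2 * a * ‖ξ‖ ^ (1 / σ)) ^ (1 - 1 / β) *
            (‖ξ‖ ^ (2 * (s + β) * (1 / β)) * Real.exp (2 * a * ‖ξ‖ ^ (1 / σ)) ^ (1 / β))
          = ‖ξ‖ ^ (2 * s * (1 - 1 / β)) * ‖ξ‖ ^ (2 * (s + β) * (1 / β)) *
            (Real.exp (2 * a * ‖ξ‖ ^ (1 / σ)) ^ (1 - 1 / β) *
             Real.exp (2 * a * ‖ξ‖ ^ (1 / σ)) ^ (1 / β)) := by ring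
        _ = ‖ξ‖ ^ (2 * s * (1 - 1 / β) + 2 * (s + β) * (1 / β)) *
            Real.exp (2 * a * ‖ξ‖ ^ (1 / σ)) ^ ((1 - 1 / β) + 1 / β) := by
            rw [← Real.rpow_add hr, ← Real.rpow_add hE]
        _ = ‖ξ‖ ^ (2 * (s + 1)) * Real.exp (2 * a * ‖ξ‖ ^ (1 / σ)) := by
            have hexp : 2 * s * (1 - 1 / β) + 2 * (s + β) * (1 / β) = 2 * (s + 1) := by
              field_simp
              ring
            rw [sub_add_cancel, Real.rpow_one, hexp]
    rw [hu, hv]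
    simp only
    rw [ENNReal.mul_rpow_of_nonneg _ _ (by linarith : (0:ℝ) ≤ 1 - 1 / β),
      ENNReal.mul_rpow_of_nonneg _ _ hl0.le,
      ENNReal.ofReal_rpow_of_pos (by positivity),
      ENNReal.ofReal_rpow_of_pos (by positivity),
      mul_mul_mul_comm, ← ENNReal.ofReal_mul (by positivity), hreal, hmsplit]
  have hmu : Measurable u := by
    rw [hu]; fun_prop
  have hmv : Measurable v := by
    rw [hv]; fun_prop
  have hconj : Real.HolderConjugate (1 / (1 - 1 / β)) β := by
    constructor
    · rw [one_div, inv_inv, inv_one, ← one_div β]; ring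
    · have : 0 < 1 - 1 / β := by linarith
      positivity
    · exact hβ0
  have h := ENNReal.lintegral_mul_le_Lp_mul_Lq (volume : Measure R3) hconj
    (f := fun ξ => u ξ ^ (1 - 1 / β)) (g := fun ξ => v ξ ^ (1 / β))
    (hmu.pow_const _).aemeasurable (hmv.pow_const _).aemeasurable
  have hfp : ∀ ξ : R3, (u ξ ^ (1 - 1 / β)) ^ (1 / (1 - 1 / β)) = u ξ := fun ξ => by
    rw [← ENNReal.rpow_mul, mul_one_div, div_self (by linarith : 1 - 1 / β ≠ 0),
      ENNReal.rpow_one]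
  have hgp : ∀ ξ : R3, (v ξ ^ (1 / β)) ^ β = v ξ := fun ξ => by
    rw [← ENNReal.rpow_mul, one_div, inv_mul_cancel₀ hβ0.ne', ENNReal.rpow_one]
  simp only [Pi.mul_apply, hfp, hgp, one_div_one_div] at h
  calc gevreySq a σ (s + 1) G = ∫⁻ ξ : R3, u ξ ^ (1 - 1 / β) * v ξ ^ (1 / β) :=
        lintegral_congr_ae hae
    _ ≤ (∫⁻ ξ : R3, u ξ) ^ (1 - 1 / β) * (∫⁻ ξ : R3, v ξ) ^ (1 / β) := h
    _ = gevreySq a σ s G ^ (1 - 1 / β) * gevreySq a σ (s + β) G ^ (1 / β) := rfl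
private lemma gevrey_interp_norm {a σ s β : ℝ} (hβ : 1 ≤ β)
    (G : R3 → ℂ) (hG : Measurable G) :
    gevreySq a σ (s + 1) G ^ (1 / 2 : ℝ) ≤
      gevreyNorm a σ s G ^ (1 - 1 / β) * gevreyNorm a σ (s + β) G ^ (1 / β) := by
  rcases eq_or_lt_of_le hβ with h1 | h1
  · rw [← h1]
    simp [gevreyNorm]
  · have h := gevrey_interp (a := a) (σ := σ) (s := s) h1 G hG
    calc gevreySq a σ (s + 1) G ^ (1 / 2 : ℝ)
        ≤ (gevreySq a σ s G ^ (1 - 1 / β) * gevreySq a σ (s + β) G ^ (1 / β)) ^ (1 / 2 : ℝ) :=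
          ENNReal.rpow_le_rpow h (by norm_num)
      _ = gevreyNorm a σ s G ^ (1 - 1 / β) * gevreyNorm a σ (s + β) G ^ (1 / β) := by
          unfold gevreyNorm
          rw [ENNReal.mul_rpow_of_nonneg _ _ (by norm_num : (0:ℝ) ≤ 1 / 2),
            ← ENNReal.rpow_mul, ← ENNReal.rpow_mul, ← ENNReal.rpow_mul, ← ENNReal.rpow_mul,
            mul_comm (1 - 1 / β) (1 / 2 : ℝ), mul_comm (1 / β) (1 / 2 : ℝ)]

/-- (Lemma 2.5 i) of the paper).
Let `a > 0`, `σ > 1`, `s ∈ [-1, 3/2)`, `α ≥ 1`, `β ≥ 1`.  There is `C = C(s) > 0` such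
that for `f ∈ Ḣ^s_{a,σ} ∩ Ḣ^{s+α}_{a,σ}` and `g ∈ Ḣ^s_{a,σ} ∩ Ḣ^{s+β}_{a,σ}` with
`e^{(a/σ)|·|^{1/σ}} f̂, e^{(a/σ)|·|^{1/σ}} ĝ ∈ L¹`, the product `fg` lies in
`Ḣ^{s+1}_{a,σ}` and
`‖fg‖_{Ḣ^{s+1}} ≤ C [‖e^{(a/σ)|·|^{1/σ}}f̂‖_{L¹}‖g‖_{Ḣ^s}^{1-1/β}‖g‖_{Ḣ^{s+β}}^{1/β}
+ ‖e^{(a/σ)|·|^{1/σ}}ĝ‖_{L¹}‖f‖_{Ḣ^s}^{1-1/α}‖f‖_{Ḣ^{s+α}}^{1/α}]`.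
Everything is phrased on the Fourier side (`F = f̂`, `G = ĝ`, and `fconv F G` is, up to a
constant absorbed in `C`, the Fourier transform of `fg`). -/
theorem gevrey_product_interpolation_L1 (a σ s α β : ℝ) (ha : 0 < a) (hσ : 1 < σ)
    (hs1 : -1 ≤ s) (hs2 : s < 3 / 2) (hα : 1 ≤ α) (hβ : 1 ≤ β) :
    ∃ C : ℝ, 0 < C ∧ ∀ F G : R3 → ℂ, Measurable F → Measurable G →
      gevreySq a σ s F < ⊤ → gevreySq a σ (s + α) F < ⊤ →
      gevreySq a σ s G < ⊤ → gevreySq a σ (s + β) G < ⊤ →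
      weightedL1 (a / σ) σ F < ⊤ → weightedL1 (a / σ) σ G < ⊤ →
      gevreySq a σ (s + 1) (fconv F G) < ⊤ ∧
      gevreyNorm a σ (s + 1) (fconv F G) ≤ ENNReal.ofReal C *
        (weightedL1 (a / σ) σ F * gevreyNorm a σ s G ^ (1 - 1 / β) *
            gevreyNorm a σ (s + β) G ^ (1 / β) +
          weightedL1 (a / σ) σ G * gevreyNorm a σ s F ^ (1 - 1 / α) *
            gevreyNorm a σ (s + α) F ^ (1 / α)) := by
  refine ⟨(2 : ℝ) ^ (s + 1), by positivity, ?_⟩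
  intro F G hF hG hFs hFsα hGs hGsβ hWF hWG
  set c : ℝ≥0∞ := ENNReal.ofReal ((2 : ℝ) ^ (s + 1)) with hc
  have hc_ne : c ≠ ⊤ := ENNReal.ofReal_ne_top
  have mφ : Measurable fun ζ : R3 => (‖F ζ‖₊ : ℝ≥0∞) := hF.nnnorm.coe_nnreal_ennreal
  have mψ : Measurable fun ζ : R3 => (‖G ζ‖₊ : ℝ≥0∞) := hG.nnnorm.coe_nnreal_ennreal
  set A : R3 → ℝ≥0∞ := fun ζ => kE (a / σ) σ ζ * (‖F ζ‖₊ : ℝ≥0∞) with hA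
  set B : R3 → ℝ≥0∞ := fun η => kW a σ (s + 1) η * (‖G η‖₊ : ℝ≥0∞) with hB
  set A' : R3 → ℝ≥0∞ := fun η => kE (a / σ) σ η * (‖G η‖₊ : ℝ≥0∞) with hA'
  set B' : R3 → ℝ≥0∞ := fun ζ => kW a σ (s + 1) ζ * (‖F ζ‖₊ : ℝ≥0∞) with hB'
  have mA : Measurable A := (kE_meas _ _).mul mφ
  have mB : Measurable B := (kW_meas _ _ _).mul mψ
  have mA' : Measurable A' := (kE_meas _ _).mul mψ
  have mB' : Measurable B' := (kW_meas _ _ _).mul mφ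
  set h1 : R3 → ℝ≥0∞ := fun ξ => ∫⁻ η : R3, A (ξ - η) * B η with hh1
  set h2 : R3 → ℝ≥0∞ := fun ξ => ∫⁻ η : R3, A' (ξ - η) * B' η with hh2
  have mh1 : Measurable h1 := Measurable.lintegral_prod_right
    ((mA.comp (measurable_fst.sub measurable_snd)).mul (mB.comp measurable_snd))
  have mh2 : Measurable h2 := Measurable.lintegral_prod_right
    ((mA'.comp (measurable_fst.sub measurable_snd)).mul (mB'.comp measurable_snd))
  have hpt : ∀ ξ : R3, kW a σ (s + 1) ξ * (‖fconv F G ξ‖₊ : ℝ≥0∞) ≤ c * (h1 ξ + h2 ξ) := by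
    intro ξ
    have hmFG : Measurable fun η : R3 => (‖F (ξ - η)‖₊ : ℝ≥0∞) * (‖G η‖₊ : ℝ≥0∞) :=
      (mφ.comp (measurable_const.sub measurable_id)).mul mψ
    have hconv : (‖fconv F G ξ‖₊ : ℝ≥0∞) ≤
        ∫⁻ η : R3, (‖F (ξ - η)‖₊ : ℝ≥0∞) * (‖G η‖₊ : ℝ≥0∞) := by
      unfold fconv
      refine le_trans (enorm_integral_le_lintegral_enorm _) (le_of_eq ?_)
      simp [nnnorm_mul, ENNReal.coe_mul, enorm_eq_nnnorm]
    calc kW a σ (s + 1) ξ * (‖fconv F G ξ‖₊ : ℝ≥0∞)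
        ≤ kW a σ (s + 1) ξ * ∫⁻ η : R3, (‖F (ξ - η)‖₊ : ℝ≥0∞) * (‖G η‖₊ : ℝ≥0∞) :=
          mul_le_mul_right hconv _
      _ = ∫⁻ η : R3, kW a σ (s + 1) ξ * ((‖F (ξ - η)‖₊ : ℝ≥0∞) * (‖G η‖₊ : ℝ≥0∞)) :=
          (lintegral_const_mul _ hmFG).symm
      _ ≤ ∫⁻ η : R3, c * (A (ξ - η) * B η + B' (ξ - η) * A' η) := by
          refine lintegral_mono fun η => ?_
          calc kW a σ (s + 1) ξ * ((‖F (ξ - η)‖₊ : ℝ≥0∞) * (‖G η‖₊ : ℝ≥0∞))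
              ≤ (c * (kE (a / σ) σ (ξ - η) * kW a σ (s + 1) η +
                  kW a σ (s + 1) (ξ - η) * kE (a / σ) σ η)) *
                  ((‖F (ξ - η)‖₊ : ℝ≥0∞) * (‖G η‖₊ : ℝ≥0∞)) :=
                mul_le_mul_left (kW_split ha hσ hs1 ξ η) _
            _ = c * (A (ξ - η) * B η + B' (ξ - η) * A' η) := by
                simp only [hA, hB, hA', hB']; ring
      _ = c * ∫⁻ η : R3, (A (ξ - η) * B η + B' (ξ - η) * A' η) :=
          lintegral_const_mul _
            (((mA.comp (measurable_const.sub measurable_id)).mul mB).add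
              ((mB'.comp (measurable_const.sub measurable_id)).mul mA'))
      _ = c * (h1 ξ + h2 ξ) := by
          have mACB : Measurable fun η : R3 => A (ξ - η) * B η :=
            (mA.comp (measurable_const.sub measurable_id)).mul mB
          rw [lintegral_add_left mACB, conv_comm B' A' mB' mA' ξ]
  have hT : gevreySq a σ (s + 1) (fconv F G) ≤ ∫⁻ ξ : R3, (c * (h1 ξ + h2 ξ)) ^ 2 := by
    rw [gevreySq_eq]
    exact lintegral_mono fun ξ => pow_le_pow_left' (hpt ξ) 2
  have sqrt_sq : ∀ x : ℝ≥0∞, (x ^ 2) ^ (1 / 2 : ℝ) = x := fun x => by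
    rw [← esq, ← ENNReal.rpow_mul]; norm_num
  have hsum : (∫⁻ ξ : R3, (c * (h1 ξ + h2 ξ)) ^ 2) ^ (1 / 2 : ℝ) ≤
      c * ((∫⁻ ξ : R3, (h1 ξ) ^ 2) ^ (1 / 2 : ℝ) + (∫⁻ ξ : R3, (h2 ξ) ^ 2) ^ (1 / 2 : ℝ)) := by
    have e : ∫⁻ ξ : R3, (c * (h1 ξ + h2 ξ)) ^ 2 = c ^ 2 * ∫⁻ ξ : R3, (h1 ξ + h2 ξ) ^ 2 := by
      rw [← lintegral_const_mul (f := fun ξ => (h1 ξ + h2 ξ) ^ 2) _ ((mh1.add mh2).pow_const 2)]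
      simp_rw [mul_pow]
    have e2 : (c ^ 2 * ∫⁻ ξ : R3, (h1 ξ + h2 ξ) ^ 2) ^ (1 / 2 : ℝ)
        = c * (∫⁻ ξ : R3, (h1 ξ + h2 ξ) ^ 2) ^ (1 / 2 : ℝ) := by
      rw [ENNReal.mul_rpow_of_nonneg _ _ (by norm_num : (0:ℝ) ≤ 1 / 2), sqrt_sq]
    rw [e, e2]
    gcongr
    have hm := ENNReal.lintegral_Lp_add_le (μ := (volume : Measure R3)) mh1.aemeasurable mh2.aemeasurable
      (one_le_two : (1:ℝ) ≤ 2)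
    simpa [esq] using hm
  have hY1 : (∫⁻ ξ : R3, (h1 ξ) ^ 2) ^ (1 / 2 : ℝ) ≤
      weightedL1 (a / σ) σ F * gevreySq a σ (s + 1) G ^ (1 / 2 : ℝ) := by
    have h := young_conv A B mA mB
    have hBsq : (∫⁻ η : R3, (B η) ^ 2) = gevreySq a σ (s + 1) G := by
      simp only [hB]; exact (gevreySq_eq _ _ _ _).symm
    have hA1 : (∫⁻ ζ : R3, A ζ) = weightedL1 (a / σ) σ F := rfl
    calc (∫⁻ ξ : R3, (h1 ξ) ^ 2) ^ (1 / 2 : ℝ)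
        ≤ ((∫⁻ ζ : R3, A ζ) ^ 2 * ∫⁻ η : R3, (B η) ^ 2) ^ (1 / 2 : ℝ) :=
          ENNReal.rpow_le_rpow h (by norm_num)
      _ = weightedL1 (a / σ) σ F * gevreySq a σ (s + 1) G ^ (1 / 2 : ℝ) := by
          rw [ENNReal.mul_rpow_of_nonneg _ _ (by norm_num : (0:ℝ) ≤ 1 / 2), sqrt_sq, hBsq, hA1]
  have hY2 : (∫⁻ ξ : R3, (h2 ξ) ^ 2) ^ (1 / 2 : ℝ) ≤
      weightedL1 (a / σ) σ G * gevreySq a σ (s + 1) F ^ (1 / 2 : ℝ) := by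
    have h := young_conv A' B' mA' mB'
    have hBsq : (∫⁻ η : R3, (B' η) ^ 2) = gevreySq a σ (s + 1) F := by
      simp only [hB']; exact (gevreySq_eq _ _ _ _).symm
    have hA1 : (∫⁻ ζ : R3, A' ζ) = weightedL1 (a / σ) σ G := rfl
    calc (∫⁻ ξ : R3, (h2 ξ) ^ 2) ^ (1 / 2 : ℝ)
        ≤ ((∫⁻ ζ : R3, A' ζ) ^ 2 * ∫⁻ η : R3, (B' η) ^ 2) ^ (1 / 2 : ℝ) :=
          ENNReal.rpow_le_rpow h (by norm_num)
      _ = weightedL1 (a / σ) σ G * gevreySq a σ (s + 1) F ^ (1 / 2 : ℝ) := by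
          rw [ENNReal.mul_rpow_of_nonneg _ _ (by norm_num : (0:ℝ) ≤ 1 / 2), sqrt_sq, hBsq, hA1]
  have hIG : gevreySq a σ (s + 1) G ^ (1 / 2 : ℝ) ≤
      gevreyNorm a σ s G ^ (1 - 1 / β) * gevreyNorm a σ (s + β) G ^ (1 / β) :=
    gevrey_interp_norm hβ G hG
  have hIF : gevreySq a σ (s + 1) F ^ (1 / 2 : ℝ) ≤
      gevreyNorm a σ s F ^ (1 - 1 / α) * gevreyNorm a σ (s + α) F ^ (1 / α) :=
    gevrey_interp_norm hα F hF
  have hmain : gevreyNorm a σ (s + 1) (fconv F G) ≤ c *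
      (weightedL1 (a / σ) σ F * gevreyNorm a σ s G ^ (1 - 1 / β) *
          gevreyNorm a σ (s + β) G ^ (1 / β) +
        weightedL1 (a / σ) σ G * gevreyNorm a σ s F ^ (1 - 1 / α) *
          gevreyNorm a σ (s + α) F ^ (1 / α)) := by
    calc gevreyNorm a σ (s + 1) (fconv F G)
        = gevreySq a σ (s + 1) (fconv F G) ^ (1 / 2 : ℝ) := rfl
      _ ≤ (∫⁻ ξ : R3, (c * (h1 ξ + h2 ξ)) ^ 2) ^ (1 / 2 : ℝ) :=
          ENNReal.rpow_le_rpow hT (by norm_num)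
      _ ≤ c * ((∫⁻ ξ : R3, (h1 ξ) ^ 2) ^ (1 / 2 : ℝ) +
            (∫⁻ ξ : R3, (h2 ξ) ^ 2) ^ (1 / 2 : ℝ)) := hsum
      _ ≤ c * (weightedL1 (a / σ) σ F * gevreySq a σ (s + 1) G ^ (1 / 2 : ℝ) +
            weightedL1 (a / σ) σ G * gevreySq a σ (s + 1) F ^ (1 / 2 : ℝ)) := by
          gcongr
      _ ≤ c * (weightedL1 (a / σ) σ F *
              (gevreyNorm a σ s G ^ (1 - 1 / β) * gevreyNorm a σ (s + β) G ^ (1 / β)) +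
            weightedL1 (a / σ) σ G *
              (gevreyNorm a σ s F ^ (1 - 1 / α) * gevreyNorm a σ (s + α) F ^ (1 / α))) := by
          gcongr
      _ = c * (weightedL1 (a / σ) σ F * gevreyNorm a σ s G ^ (1 - 1 / β) *
            gevreyNorm a σ (s + β) G ^ (1 / β) +
          weightedL1 (a / σ) σ G * gevreyNorm a σ s F ^ (1 - 1 / α) *
            gevreyNorm a σ (s + α) F ^ (1 / α)) := by ring
  have hβ' : (0:ℝ) ≤ 1 - 1 / β := by
    have : 1 / β ≤ 1 := by rw [div_le_one (by linarith)]; linarith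
    linarith
  have hα' : (0:ℝ) ≤ 1 - 1 / α := by
    have : 1 / α ≤ 1 := by rw [div_le_one (by linarith)]; linarith
    linarith
  have hNG : gevreyNorm a σ s G ≠ ⊤ := (ENNReal.rpow_lt_top_of_nonneg (by norm_num) hGs.ne).ne
  have hNGβ : gevreyNorm a σ (s + β) G ≠ ⊤ :=
    (ENNReal.rpow_lt_top_of_nonneg (by norm_num) hGsβ.ne).ne
  have hNF : gevreyNorm a σ s F ≠ ⊤ := (ENNReal.rpow_lt_top_of_nonneg (by norm_num) hFs.ne).ne
  have hNFα : gevreyNorm a σ (s + α) F ≠ ⊤ :=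
    (ENNReal.rpow_lt_top_of_nonneg (by norm_num) hFsα.ne).ne
  have hRHS : c * (weightedL1 (a / σ) σ F * gevreyNorm a σ s G ^ (1 - 1 / β) *
          gevreyNorm a σ (s + β) G ^ (1 / β) +
        weightedL1 (a / σ) σ G * gevreyNorm a σ s F ^ (1 - 1 / α) *
          gevreyNorm a σ (s + α) F ^ (1 / α)) < ⊤ := by
    refine ENNReal.mul_lt_top hc_ne.lt_top (ENNReal.add_lt_top.mpr ⟨?_, ?_⟩)
    · exact ENNReal.mul_lt_top
        (ENNReal.mul_lt_top hWF (ENNReal.rpow_lt_top_of_nonneg hβ' hNG))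
        (ENNReal.rpow_lt_top_of_nonneg (by positivity) hNGβ)
    · exact ENNReal.mul_lt_top
        (ENNReal.mul_lt_top hWG (ENNReal.rpow_lt_top_of_nonneg hα' hNF))
        (ENNReal.rpow_lt_top_of_nonneg (by positivity) hNFα)
  refine ⟨?_, hmain⟩
  by_contra hcon
  rw [not_lt, top_le_iff] at hcon
  have htop : gevreyNorm a σ (s + 1) (fconv F G) = ⊤ := by
    rw [gevreyNorm, hcon, ENNReal.top_rpow_of_pos (by norm_num)]
  rw [htop] at hmain
  exact lt_irrefl _ (lt_of_le_of_lt hmain hRHS)
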